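/- Let G be a bull-free, gem-free graph with no homogeneous set, and let (A,B) be a tame homogeneous pair of G with associated sets C, D, E, F. If A is not a stable set, then C is anti-complete to F and complete to E. -/
import Mathlib


/-- The bull: a triangle `{0,1,2}` with pendant vertices `3` (attached to `1`)
and `4` (attached to `2`). -/
def bull : SimpleGraph (Fin 5) :=
  SimpleGraph.fromRel (fun a b =>
    (a = 0 ∧ b = 1) ∨ (a = 0 ∧ b = 2) ∨ (a = 1 ∧ b = 2) ∨ (a = 1 ∧ b = 3) ∨ (a = 2 ∧ b = 4))

/-- The gem: the path `0 – 1 – 2 – 3` plus a vertex `4` adjacent to all of it. -/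
def gem : SimpleGraph (Fin 5) :=
  SimpleGraph.fromRel (fun a b =>
    (a = 0 ∧ b = 1) ∨ (a = 1 ∧ b = 2) ∨ (a = 2 ∧ b = 3) ∨ a = 4)

/-- A homogeneous set. -/
def IsHomogeneousSet {V : Type*} (G : SimpleGraph V) (X : Set V) : Prop :=
  X.Nontrivial ∧ X ≠ Set.univ ∧
    ∀ v ∉ X, (∀ x ∈ X, G.Adj v x) ∨ (∀ x ∈ X, ¬ G.Adj v x)

/-- Build an embedding of the bull from five suitable vertices. -/
lemma build_bull {V : Type*} (G : SimpleGraph V) (v0 v1 v2 v3 v4 : V)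
    (h01 : G.Adj v0 v1) (h02 : G.Adj v0 v2) (h12 : G.Adj v1 v2)
    (h13 : G.Adj v1 v3) (h24 : G.Adj v2 v4)
    (n03 : ¬G.Adj v0 v3) (n04 : ¬G.Adj v0 v4) (n14 : ¬G.Adj v1 v4)
    (n23 : ¬G.Adj v2 v3) (n34 : ¬G.Adj v3 v4)
    (d03 : v0 ≠ v3) (d04 : v0 ≠ v4) (d14 : v1 ≠ v4) (d23 : v2 ≠ v3) (d34 : v3 ≠ v4) :
    Nonempty (bull ↪g G) := by
  refine ⟨⟨⟨![v0,v1,v2,v3,v4], ?_⟩, ?_⟩⟩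
  · intro a b
    fin_cases a <;> fin_cases b <;>
      simp_all [h01.ne, h02.ne, h12.ne, h13.ne, h24.ne, d03, d04, d14, d23, d34,
        h01.ne', h02.ne', h12.ne', h13.ne', h24.ne', d03.symm, d04.symm, d14.symm,
        d23.symm, d34.symm]
  · intro a b
    fin_cases a <;> fin_cases b <;>
      simp [bull, SimpleGraph.fromRel_adj] <;>
      first
        | exact h01 | exact h02 | exact h12 | exact h13 | exact h24
        | exact h01.symm | exact h02.symm | exact h12.symm | exact h13.symm | exact h24.symm
        | exact n03 | exact n04 | exact n14 | exact n23 | exact n34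
        | exact fun h => n03 h.symm | exact fun h => n04 h.symm | exact fun h => n14 h.symm
        | exact fun h => n23 h.symm | exact fun h => n34 h.symm

/-- Build an embedding of the gem from five suitable vertices. -/
lemma build_gem {V : Type*} (G : SimpleGraph V) (v0 v1 v2 v3 v4 : V)
    (h01 : G.Adj v0 v1) (h12 : G.Adj v1 v2) (h23 : G.Adj v2 v3)
    (h40 : G.Adj v4 v0) (h41 : G.Adj v4 v1) (h42 : G.Adj v4 v2) (h43 : G.Adj v4 v3)
    (n02 : ¬G.Adj v0 v2) (n03 : ¬G.Adj v0 v3) (n13 : ¬G.Adj v1 v3)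
    (d02 : v0 ≠ v2) (d03 : v0 ≠ v3) (d13 : v1 ≠ v3) :
    Nonempty (gem ↪g G) := by
  refine ⟨⟨⟨![v0,v1,v2,v3,v4], ?_⟩, ?_⟩⟩
  · intro a b
    fin_cases a <;> fin_cases b <;>
      simp_all [h01.ne, h12.ne, h23.ne, h40.ne, h41.ne, h42.ne, h43.ne,
        h01.ne', h12.ne', h23.ne', h40.ne', h41.ne', h42.ne', h43.ne',
        d02, d03, d13, d02.symm, d03.symm, d13.symm]
  · intro a b
    fin_cases a <;> fin_cases b <;>
      simp [gem, SimpleGraph.fromRel_adj] <;>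
      first
        | exact h01 | exact h12 | exact h23 | exact h40 | exact h41 | exact h42 | exact h43
        | exact h01.symm | exact h12.symm | exact h23.symm
        | exact h40.symm | exact h41.symm | exact h42.symm | exact h43.symm
        | exact n02 | exact n03 | exact n13
        | exact fun h => n02 h.symm | exact fun h => n03 h.symm | exact fun h => n13 h.symm

/-- If `A` contains an edge, every vertex outside `A ∪ B` is complete or anticomplete
to `A`, and `G` has no homogeneous set, then some vertex of `B` is mixed on an edge
of `A`. -/
lemma exists_mixed_edge {V : Type*} (G : SimpleGraph V) (A B : Set V)
    (hdisj : Disjoint A B) (hBne : B.Nonempty)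
    (hout : ∀ v, v ∉ A → v ∉ B → (∀ x ∈ A, G.Adj v x) ∨ (∀ x ∈ A, ¬G.Adj v x))
    (hhom : ¬ ∃ X : Set V, IsHomogeneousSet G X)
    (a1 a2 : V) (ha1 : a1 ∈ A) (ha2 : a2 ∈ A) (hadj : G.Adj a1 a2) :
    ∃ x ∈ A, ∃ y ∈ A, ∃ b ∈ B, G.Adj x y ∧ G.Adj b x ∧ ¬ G.Adj b y := by
  by_contra hno
  push_neg at hno
  set H := SimpleGraph.induce A G with hH
  set K : Set V := {x | ∃ h : x ∈ A, H.Reachable ⟨a1, ha1⟩ ⟨x, h⟩} with hK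
  have hKA : K ⊆ A := fun x hx => hx.1
  have hKclosed : ∀ x ∈ K, ∀ y ∈ A, G.Adj x y → y ∈ K := by
    rintro x ⟨hxA, hr⟩ y hyA hxy
    refine ⟨hyA, hr.trans (SimpleGraph.Adj.reachable ?_)⟩
    simpa [hH] using hxy
  have hwalk : ∀ b ∈ B, ∀ (u w : A), H.Walk u w → G.Adj b ↑u → G.Adj b ↑w := by
    intro b hb u w p
    induction p with
    | nil => exact id
    | cons h p ih =>
        intro hbu
        exact ih (hno _ (Subtype.mem _) _ (Subtype.mem _) b hb (by simpa [hH] using h) hbu)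
  apply hhom
  refine ⟨K, ⟨a1, ⟨ha1, SimpleGraph.Reachable.refl _⟩, a2,
      ⟨ha2, SimpleGraph.Adj.reachable (by simpa [hH] using hadj)⟩, hadj.ne⟩, ?_, ?_⟩
  · obtain ⟨b, hb⟩ := hBne
    intro heq
    exact (Set.disjoint_left.mp hdisj (hKA (heq ▸ Set.mem_univ b)) hb)
  · intro v hv
    by_cases hvA : v ∈ A
    · right
      intro x hx hvx
      exact hv (hKclosed x hx v hvA hvx.symm)
    · by_cases hvB : v ∈ B
      · by_cases hex : ∃ x ∈ K, G.Adj v x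
        · left
          rintro y ⟨hyA, hyr⟩
          obtain ⟨x, ⟨hxA, hxr⟩, hvx⟩ := hex
          obtain ⟨p⟩ := hxr.symm.trans hyr
          exact hwalk v hvB ⟨x, hxA⟩ ⟨y, hyA⟩ p hvx
        · right
          exact fun x hx hvx => hex ⟨x, hx, hvx⟩
      · rcases hout v hvA hvB with h | h
        · exact Or.inl fun x hx => h x (hKA hx)
        · exact Or.inr fun x hx => h x (hKA hx)

/-- Lemma on tame homogeneous pairs in bull-free gem-free graphs without homogeneous
sets: if `A` is not stable, then `C` is anti-complete to `F` and complete to `E`. -/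
theorem hom_pair_A_not_stable {V : Type*} [Fintype V] (G : SimpleGraph V)
    (hbull : ¬ Nonempty (bull ↪g G)) (hgem : ¬ Nonempty (gem ↪g G))
    (hhom : ¬ ∃ X : Set V, IsHomogeneousSet G X)
    (A B C D E F : Set V)
    (hAne : A.Nonempty) (hBne : B.Nonempty)
    (hpw : List.Pairwise Disjoint [A, B, C, D, E, F])
    (hunion : A ∪ B ∪ C ∪ D ∪ E ∪ F = Set.univ)
    (hC : ∀ c ∈ C, (∀ a ∈ A, G.Adj c a) ∧ (∀ b ∈ B, ¬ G.Adj c b))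
    (hD : ∀ d ∈ D, (∀ b ∈ B, G.Adj d b) ∧ (∀ a ∈ A, ¬ G.Adj d a))
    (hE : ∀ e ∈ E, (∀ a ∈ A, G.Adj e a) ∧ (∀ b ∈ B, G.Adj e b))
    (hF : ∀ f ∈ F, (∀ a ∈ A, ¬ G.Adj f a) ∧ (∀ b ∈ B, ¬ G.Adj f b))
    (htame1 : 2 < A.ncard + B.ncard)
    (htame2 : A.ncard + B.ncard + 2 < Fintype.card V)
    (hmix1 : ∃ a ∈ A, ∃ b ∈ B, G.Adj a b)
    (hmix2 : ∃ a ∈ A, ∃ b ∈ B, ¬ G.Adj a b)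
    (hAnotstable : ∃ a1 ∈ A, ∃ a2 ∈ A, G.Adj a1 a2) :
    (∀ c ∈ C, ∀ f ∈ F, ¬ G.Adj c f) ∧ (∀ c ∈ C, ∀ e ∈ E, G.Adj c e) := by
  simp only [List.pairwise_cons, List.mem_cons, List.not_mem_nil, List.mem_singleton,
    forall_eq_or_imp, forall_eq, IsEmpty.forall_iff, imp_true_iff, and_true] at hpw
  obtain ⟨⟨dAB, dAC, dAD, dAE, dAF⟩, ⟨dBC, dBD, dBE, dBF⟩, ⟨dCD, dCE, dCF⟩, -⟩ := hpw
  have hout : ∀ v, v ∉ A → v ∉ B → (∀ x ∈ A, G.Adj v x) ∨ (∀ x ∈ A, ¬G.Adj v x) := by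
    intro v hvA hvB
    have hv : v ∈ A ∪ B ∪ C ∪ D ∪ E ∪ F := hunion ▸ Set.mem_univ v
    rcases hv with ((((hv | hv) | hv) | hv) | hv) | hv
    · exact absurd hv hvA
    · exact absurd hv hvB
    · exact Or.inl fun x hx => (hC v hv).1 x hx
    · exact Or.inr fun x hx => (hD v hv).2 x hx
    · exact Or.inl fun x hx => (hE v hv).1 x hx
    · exact Or.inr fun x hx => (hF v hv).1 x hx
  obtain ⟨a1, ha1, a2, ha2, ha12⟩ := hAnotstable
  obtain ⟨x, hx, y, hy, b, hb, hxy, hbx, hby⟩ :=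
    exists_mixed_edge G A B dAB hBne hout hhom a1 a2 ha1 ha2 ha12
  constructor
  · intro c hc f hf hcf
    exact hbull <| build_bull G y x c b f
      hxy.symm ((hC c hc).1 y hy).symm ((hC c hc).1 x hx).symm hbx.symm hcf
      (fun h => hby h.symm) (fun h => (hF f hf).1 y hy h.symm)
      (fun h => (hF f hf).1 x hx h.symm) ((hC c hc).2 b hb)
      (fun h => (hF f hf).2 b hb h.symm)
      (fun h => Set.disjoint_left.mp dAB hy (h ▸ hb))
      (fun h => Set.disjoint_left.mp dAF hy (h ▸ hf))
      (fun h => Set.disjoint_left.mp dAF hx (h ▸ hf))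
      (fun h => Set.disjoint_left.mp dBC hb (h ▸ hc))
      (fun h => Set.disjoint_left.mp dBF hb (h ▸ hf))
  · intro c hc e he
    by_contra hce
    exact hgem <| build_gem G c y e b x
      ((hC c hc).1 y hy) ((hE e he).1 y hy).symm ((hE e he).2 b hb)
      ((hC c hc).1 x hx).symm hxy ((hE e he).1 x hx).symm hbx.symm
      hce ((hC c hc).2 b hb) (fun h => hby h.symm)
      (fun h => Set.disjoint_left.mp dCE (h ▸ hc) he)
      (fun h => Set.disjoint_left.mp dBC hb (h ▸ hc))
      (fun h => Set.disjoint_left.mp dAB hy (h ▸ hb))
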